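/- Let k be a positive integer and let f : ℝ → ℝ be a Fibonacci function with period k, i.e. f(x+2k) = f(x+k) + f(x) for all real x. Assume f(x) ≠ 0 for all real x and f(x+k)/f(x) ≠ 1 - φ for all real x. Then for every real number x, the sequence n ↦ f(x+(n+1)k)/f(x+nk) converges to φ as n → ∞. -/

import Mathlib

private lemma aux_fib_ratio (a : ℕ → ℝ) (φ ψ : ℝ)
    (hφ2 : φ ^ 2 = φ + 1) (hψ2 : ψ ^ 2 = ψ + 1)
    (hφpos : 0 < φ) (hlt : |ψ / φ| < 1) (hd : φ ≠ ψ)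
    (hane : ∀ n, a n ≠ 0) (hrec : ∀ n, a (n + 2) = a (n + 1) + a n)
    (h1 : a 1 ≠ ψ * a 0) :
    Filter.Tendsto (fun n => a (n + 1) / a n) Filter.atTop (nhds φ) := by
  have hdne : φ - ψ ≠ 0 := sub_ne_zero.2 hd
  have hφne : φ ≠ 0 := ne_of_gt hφpos
  obtain ⟨A, hA⟩ : ∃ A : ℝ, A = (a 1 - ψ * a 0) / (φ - ψ) := ⟨_, rfl⟩
  obtain ⟨B, hB⟩ : ∃ B : ℝ, B = (φ * a 0 - a 1) / (φ - ψ) := ⟨_, rfl⟩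
  have hAne : A ≠ 0 := by
    intro h0
    rw [hA, div_eq_zero_iff] at h0
    rcases h0 with h0 | h0
    · exact h1 (by linarith)
    · exact hdne h0
  have key : ∀ n, a n = A * φ ^ n + B * ψ ^ n := by
    have main : ∀ n, a n = A * φ ^ n + B * ψ ^ n ∧
        a (n + 1) = A * φ ^ (n + 1) + B * ψ ^ (n + 1) := by
      intro n
      induction n with
      | zero =>
        constructor
        · simp only [pow_zero, mul_one, hA, hB]
          rw [← add_div, eq_div_iff hdne]
          ring
        · simp only [pow_one, hA, hB]
          rw [div_mul_eq_mul_div, div_mul_eq_mul_div, ← add_div,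
            eq_div_iff hdne]
          ring
      | succ m ih =>
        refine ⟨ih.2, ?_⟩
        rw [hrec m, ih.1, ih.2]
        linear_combination (-(A * φ ^ m)) * hφ2 - B * ψ ^ m * hψ2
    exact fun n => (main n).1
  obtain ⟨t, ht⟩ : ∃ t : ℕ → ℝ, t = fun n => B / A * (ψ / φ) ^ n := ⟨_, rfl⟩
  have hden : ∀ n, a n = A * φ ^ n * (1 + t n) := by
    intro n
    rw [key n, ht]
    simp only [div_pow]
    field_simp
  have htne : ∀ n, 1 + t n ≠ 0 := by
    intro n h0
    exact hane n (by rw [hden n, h0, mul_zero])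
  have heq : ∀ n, a (n + 1) / a n = (φ + ψ * t n) / (1 + t n) := by
    intro n
    have hnum : a (n + 1) = A * φ ^ n * (φ + ψ * t n) := by
      rw [key (n + 1), ht]
      simp only [div_pow]
      field_simp
      ring
    rw [hnum, hden n, mul_div_mul_left _ _ (mul_ne_zero hAne (pow_ne_zero n hφne))]
  have htlim : Filter.Tendsto t Filter.atTop (nhds 0) := by
    rw [ht]
    have := (tendsto_pow_atTop_nhds_zero_of_abs_lt_one hlt).const_mul (B / A)
    simpa using this
  have hnum : Filter.Tendsto (fun n => φ + ψ * t n) Filter.atTop (nhds φ) := by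
    have := (htlim.const_mul ψ).const_add φ
    simpa using this
  have hden' : Filter.Tendsto (fun n => 1 + t n) Filter.atTop (nhds 1) := by
    have := htlim.const_add (1 : ℝ)
    simpa using this
  have hfin := hnum.div hden' one_ne_zero
  simp only [div_one] at hfin
  exact hfin.congr fun n => (heq n).symm

theorem stmt_9 (k : ℕ) (hk : 0 < k) (f : ℝ → ℝ)
    (hf : ∀ x : ℝ, f (x + 2 * (k : ℝ)) = f (x + (k : ℝ)) + f x)
    (hne : ∀ x : ℝ, f x ≠ 0)
    (hratio : ∀ x : ℝ, f (x + (k : ℝ)) / f x ≠ 1 - (1 + Real.sqrt 5) / 2) :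
    ∀ x : ℝ,
      Filter.Tendsto (fun n : ℕ => f (x + ((n : ℝ) + 1) * (k : ℝ)) / f (x + (n : ℝ) * (k : ℝ)))
        Filter.atTop (nhds ((1 + Real.sqrt 5) / 2)) := by
  intro x
  have h5 : Real.sqrt 5 ^ 2 = 5 := Real.sq_sqrt (by norm_num)
  have hs1 : (1:ℝ) < Real.sqrt 5 := by nlinarith [Real.sqrt_nonneg 5]
  obtain ⟨a, ha⟩ : ∃ a : ℕ → ℝ, a = fun n : ℕ => f (x + n * k) := ⟨_, rfl⟩
  have hane : ∀ n, a n ≠ 0 := fun n => by rw [ha]; exact hne _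
  have harec : ∀ n : ℕ, a (n + 2) = a (n + 1) + a n := by
    intro n
    have h := hf (x + n * k)
    have e1 : x + ((n:ℕ)+2 : ℕ) * (k:ℝ) = x + n * k + 2 * k := by push_cast; ring
    have e2 : x + ((n:ℕ)+1 : ℕ) * (k:ℝ) = x + n * k + k := by push_cast; ring
    simp only [ha, e1, e2]
    exact h
  have hφpos : (0:ℝ) < (1 + Real.sqrt 5) / 2 := by nlinarith
  have hlt : |(1 - Real.sqrt 5) / 2 / ((1 + Real.sqrt 5) / 2)| < 1 := by
    rw [abs_div, abs_of_pos hφpos, div_lt_one hφpos, abs_lt]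
    constructor <;> nlinarith
  have h1 : a 1 ≠ (1 - Real.sqrt 5) / 2 * a 0 := by
    intro h0
    apply hratio x
    have e1 : x + ((1:ℕ):ℝ) * k = x + k := by push_cast; ring
    have e0 : x + ((0:ℕ):ℝ) * k = x := by push_cast; ring
    have hf1 : f (x + k) = (1 - Real.sqrt 5) / 2 * f x := by
      have := h0
      rw [ha] at this
      simpa [e1, e0] using this
    rw [hf1, mul_div_assoc, div_self (hne x), mul_one]
    ring
  have main := aux_fib_ratio a ((1 + Real.sqrt 5) / 2) ((1 - Real.sqrt 5) / 2)
    (by linear_combination h5 / 4) (by linear_combination h5 / 4)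
    hφpos hlt (by intro h; nlinarith) hane harec h1
  refine main.congr fun n => ?_
  have e1 : x + ((n:ℕ)+1 : ℕ) * (k:ℝ) = x + ((n:ℝ) + 1) * k := by push_cast; ring
  rw [ha]
  simp only [e1]
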